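/- Let κ be a regular uncountable cardinal such that |α|^{<θ} < κ for all α < κ, where θ < κ is a cardinal. Let D be a normal filter on κ with {δ < κ : cf(δ) ≥ θ} ∈ D. Then D has the Δ-system θ-property: for any D-positive Y ⊆ κ and any sequence ⟨B_α : α ∈ Y⟩ of sets each of cardinality < θ, there is a D-positive Z ⊆ Y such that ⟨B_α : α ∈ Z⟩ forms a Δ-system, i.e., there is a set B* with B_α ∩ B_β = B* for all distinct α, β ∈ Z. -/

import Mathlib

universe u

open Cardinal Set

lemma sSup_small_lt {s : Set Ordinal.{u}} {c : Ordinal.{u}}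
    (h1 : #s < Cardinal.lift.{u+1} c.cof) (h2 : ∀ x ∈ s, x < c) : sSup s < c := by
  rcases s.eq_empty_or_nonempty with rfl | hne
  · rw [csSup_empty]
    rcases eq_zero_or_pos c with rfl | hc
    · rw [Ordinal.cof_zero] at h1; simp at h1
    · exact hc
  · obtain ⟨c', hc'lt, hc'eq⟩ := Cardinal.lt_lift_iff.mp h1
    have hmk : Cardinal.lift.{u+1} #(c'.out) = Cardinal.lift.{u} #(↥s) := by
      rw [Cardinal.mk_out, hc'eq, Cardinal.lift_id'.{u, u+1}]
    obtain ⟨e⟩ := Cardinal.lift_mk_eq'.{u, u+1}.mp hmk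
    have hlt : (⨆ i : c'.out, ((e i : ↥s) : Ordinal)) < c := by
      refine Ordinal.iSup_lt_ord ?_ fun i => h2 _ (e i).2
      rw [Cardinal.mk_out]; exact hc'lt
    refine lt_of_le_of_lt (csSup_le hne ?_) hlt
    intro x hx
    have h3 := Ordinal.le_iSup (fun i : c'.out => ((e i : ↥s) : Ordinal)) (e.symm ⟨x, hx⟩)
    simpa using h3

theorem stmt4 {V : Type u} (κ θ : Cardinal.{u})
    (hreg : κ.IsRegular) (hunc : Cardinal.aleph0 < κ) (hθ : θ < κ)
    (hsmall : ∀ α : Ordinal.{u}, α < κ.ord → Cardinal.powerlt α.card θ < κ)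
    (K : Set Ordinal.{u}) (hK : K = Set.Iio κ.ord)
    (D : Set (Set Ordinal.{u}))
    (hsub : ∀ X ∈ D, X ⊆ K)
    (hup : ∀ X ∈ D, ∀ Y, X ⊆ Y → Y ⊆ K → Y ∈ D)
    (hint : ∀ X ∈ D, ∀ Y ∈ D, X ∩ Y ∈ D)
    (htail : ∀ γ ∈ K, {δ ∈ K | γ < δ} ∈ D)
    (hdiag : ∀ f : Ordinal.{u} → Set Ordinal.{u}, (∀ γ ∈ K, f γ ∈ D) →
      {δ ∈ K | ∀ γ < δ, δ ∈ f γ} ∈ D)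
    (hcof : {δ ∈ K | θ ≤ δ.cof} ∈ D)
    (Y : Set Ordinal.{u}) (hY : Y ⊆ K) (hpos : K \ Y ∉ D)
    (B : Ordinal.{u} → Set V) (hB : ∀ α ∈ Y, Cardinal.mk (B α) < θ) :
    ∃ Z ⊆ Y, K \ Z ∉ D ∧
      ∃ Bs : Set V, ∀ α ∈ Z, ∀ β ∈ Z, α ≠ β → B α ∩ B β = Bs := by
  subst hK
  classical
  -- basic facts
  have hκ0 : (0 : Ordinal) < κ.ord := by
    rw [Cardinal.lt_ord, Ordinal.card_zero]; exact hreg.pos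
  have hKD : Set.Iio κ.ord ∈ D := by
    have h0 := htail 0 hκ0
    exact hup _ h0 _ (Set.sep_subset _ _) (subset_refl _)
  have hposNe : ∀ S : Set Ordinal.{u}, Set.Iio κ.ord \ S ∉ D → S.Nonempty := by
    intro S hS
    rcases S.eq_empty_or_nonempty with rfl | h
    · exact absurd (by simpa using hKD) hS
    · exact h
  have hposInter : ∀ S A : Set Ordinal.{u}, Set.Iio κ.ord \ S ∉ D → A ∈ D →
      Set.Iio κ.ord \ (S ∩ A) ∉ D := by
    intro S A hS hA h
    apply hS
    have h2 : (Set.Iio κ.ord \ (S ∩ A)) ∩ A ∈ D := hint _ h _ hA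
    refine hup _ h2 _ ?_ Set.diff_subset
    rintro x ⟨⟨hxK, hx⟩, hxA⟩
    exact ⟨hxK, fun hxS => hx ⟨hxS, hxA⟩⟩
  have fodor : ∀ (S : Set Ordinal.{u}) (g : Ordinal.{u} → Ordinal.{u}),
      Set.Iio κ.ord \ S ∉ D → (∀ δ ∈ S, g δ < δ) →
      ∃ γ, Set.Iio κ.ord \ {δ ∈ S | g δ = γ} ∉ D := by
    intro S g hS hg
    by_contra h
    push_neg at h
    apply hS
    have hA := hdiag (fun γ => Set.Iio κ.ord \ {δ ∈ S | g δ = γ}) (fun γ _ => h γ)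
    refine hup _ hA _ ?_ Set.diff_subset
    rintro δ ⟨hδK, hδ⟩
    refine ⟨hδK, fun hδS => ?_⟩
    exact (hδ (g δ) (hg δ hδS)).2 ⟨hδS, rfl⟩
  have hYne : Y.Nonempty := hposNe Y hpos
  -- the union and the coding of the B's by ordinals
  set U : Set V := ⋃ a : ↥Y, B a.1 with hU
  have hmemU : ∀ (α : Ordinal.{u}), α ∈ Y → B α ⊆ U := by
    intro α hα v hv
    exact Set.mem_iUnion.mpr ⟨⟨α, hα⟩, hv⟩
  haveI : Nonempty ↥Y := hYne.to_subtype
  have hUcard : Cardinal.lift.{u+1} #(↥U) ≤ Cardinal.lift.{u} #(↥(Set.Iio κ.ord)) := by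
    rw [Cardinal.lift_id'.{u, u+1}]
    calc Cardinal.lift.{u+1} #(↥U)
        ≤ Cardinal.lift.{u} #(↥Y) * ⨆ a : ↥Y, Cardinal.lift.{u+1} #(B a.1) :=
          Cardinal.mk_iUnion_le_lift _
      _ ≤ Cardinal.lift.{u+1} κ * Cardinal.lift.{u+1} θ := by
          refine mul_le_mul' ?_ ?_
          · rw [Cardinal.lift_id'.{u, u+1}]
            calc #(↥Y) ≤ #(↥(Set.Iio κ.ord)) := Cardinal.mk_le_mk_of_subset hY
              _ = Cardinal.lift.{u+1} κ := by
                  rw [Ordinal.mk_Iio_ordinal, Cardinal.card_ord]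
          · exact ciSup_le fun a => (Cardinal.lift_lt.mpr (hB a.1 a.2)).le
      _ = Cardinal.lift.{u+1} (κ * θ) := (Cardinal.lift_mul _ _).symm
      _ ≤ Cardinal.lift.{u+1} (κ * κ) := Cardinal.lift_le.mpr (mul_le_mul_right hθ.le _)
      _ = Cardinal.lift.{u+1} κ := by rw [Cardinal.mul_eq_self hreg.aleph0_le]
      _ = #(↥(Set.Iio κ.ord)) := by rw [Ordinal.mk_Iio_ordinal, Cardinal.card_ord]
  obtain ⟨emb⟩ := Cardinal.lift_mk_le'.{u, u+1}.mp hUcard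
  set hfun : ↥U → Ordinal.{u} := fun x => ((emb x : ↥(Set.Iio κ.ord)) : Ordinal.{u}) with hhfun
  have hfinj : Function.Injective hfun := by
    intro x y hxy
    exact emb.injective (Subtype.val_injective hxy)
  have hflt : ∀ x, hfun x < κ.ord := fun x => (emb x).2
  set b : Ordinal.{u} → Set Ordinal.{u} :=
    fun α => hfun '' (Subtype.val ⁻¹' B α) with hb
  have hbsub : ∀ α, b α ⊆ Set.Iio κ.ord := by
    rintro α x ⟨y, _, rfl⟩; exact hflt y
  have hbcard : ∀ α ∈ Y, #(b α) = Cardinal.lift.{u+1} #(B α) := by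
    intro α hα
    have h1 : Cardinal.lift.{u} #(b α) = Cardinal.lift.{u+1}
        #(↥(Subtype.val ⁻¹' B α : Set ↥U)) :=
      Cardinal.mk_image_eq_lift hfun _ hfinj
    rw [Cardinal.lift_id'.{u, u+1}] at h1
    have h2 : #(↥(Subtype.val ⁻¹' B α : Set ↥U)) = #(B α) :=
      Cardinal.mk_preimage_of_injective_of_subset_range Subtype.val (B α)
        Subtype.val_injective (by rw [Subtype.range_coe]; exact hmemU α hα)
    rw [h1, h2]
  -- continuing
  have hblt : ∀ α ∈ Y, #(b α) < Cardinal.lift.{u+1} θ := by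
    intro α hα; rw [hbcard α hα]; exact Cardinal.lift_lt.mpr (hB α hα)
  -- Step B: Fodor to fix the sup of the trace
  set Y1 : Set Ordinal.{u} := Y ∩ {δ ∈ Set.Iio κ.ord | θ ≤ δ.cof} with hY1
  have hY1pos : Set.Iio κ.ord \ Y1 ∉ D := hposInter Y _ hpos hcof
  set p : Ordinal.{u} → Set Ordinal.{u} := fun δ => b δ ∩ Set.Iio δ with hp
  have hpcard : ∀ α ∈ Y, #(p α) < Cardinal.lift.{u+1} θ := fun α hα =>
    lt_of_le_of_lt (Cardinal.mk_le_mk_of_subset Set.inter_subset_left) (hblt α hα)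
  have hreglt : ∀ δ ∈ Y1, sSup (p δ) < δ := by
    intro δ hδ
    refine sSup_small_lt ?_ (fun x hx => hx.2)
    exact lt_of_lt_of_le (hpcard δ hδ.1) (Cardinal.lift_le.mpr hδ.2.2)
  obtain ⟨γ₀, hS1pos⟩ := fodor Y1 (fun δ => sSup (p δ)) hY1pos hreglt
  set S1 : Set Ordinal.{u} := {δ ∈ Y1 | sSup (p δ) = γ₀} with hS1
  obtain ⟨δ₀, hδ₀⟩ := hposNe S1 hS1pos
  have hγ₀K : γ₀ ∈ Set.Iio κ.ord := by
    have h1 := hreglt δ₀ hδ₀.1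
    rw [hδ₀.2] at h1
    exact lt_trans h1 (hY hδ₀.1.1)
  have hγ₀succ : γ₀ + 1 < κ.ord := by
    rw [Ordinal.add_one_eq_succ]
    exact (Cardinal.isSuccLimit_ord hreg.aleph0_le).succ_lt hγ₀K
  set S1' : Set Ordinal.{u} := S1 ∩ {δ ∈ Set.Iio κ.ord | γ₀ < δ} with hS1'
  have hS1'pos : Set.Iio κ.ord \ S1' ∉ D := hposInter S1 _ hS1pos (htail γ₀ hγ₀K)
  have hS1'Y : S1' ⊆ Y := fun δ hδ => hδ.1.1.1
  have hpsub : ∀ δ ∈ S1', p δ ⊆ Set.Iio (γ₀ + 1) := by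
    intro δ hδ x hx
    have hbdd : BddAbove (p δ) := ⟨δ, fun y hy => (le_of_lt hy.2)⟩
    have h1 : x ≤ sSup (p δ) := le_csSup hbdd hx
    rw [hδ.1.2] at h1
    rw [Set.mem_Iio, Ordinal.add_one_eq_succ, Order.lt_succ_iff]
    exact h1
  -- representatives for trace values
  set r : Ordinal.{u} → Ordinal.{u} := fun δ => sInf {δ' | δ' ∈ S1' ∧ p δ' = p δ} with hrdef
  have hr : ∀ δ ∈ S1', r δ ∈ S1' ∧ p (r δ) = p δ := by
    intro δ hδ
    have h1 : sInf {δ' | δ' ∈ S1' ∧ p δ' = p δ} ∈ {δ' | δ' ∈ S1' ∧ p δ' = p δ} :=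
      csInf_mem ⟨δ, hδ, rfl⟩
    simpa only [hrdef, Set.mem_setOf_eq] using h1
  have hrinj : ∀ δ ∈ S1', ∀ δ' ∈ S1', p δ = p δ' → r δ = r δ' := by
    intro δ hδ δ' hδ' hpp
    simp only [hrdef, hpp]
  -- pigeonhole: some trace value is positive
  have hPigeon : ∃ ρ ∈ r '' S1', Set.Iio κ.ord \ {δ ∈ S1' | r δ = ρ} ∉ D := by
    by_contra hcon
    push_neg at hcon
    apply hS1'pos
    set lam : Cardinal.{u} := θ * Cardinal.powerlt (γ₀ + 1).card θ with hlam
    have hlamκ : lam < κ := Cardinal.mul_lt_of_lt hreg.aleph0_le hθ (hsmall _ hγ₀succ)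
    have henc : ∀ ρ : ↥(r '' S1'),
        ∃ z : Σ o : ↥(Set.Iio θ.ord), (↥(Set.Iio o.1) → ↥(Set.Iio (γ₀+1))),
          (Set.range fun i => ((z.2 i : ↥(Set.Iio (γ₀+1))) : Ordinal.{u})) = p ρ.1 := by
      intro ρ
      obtain ⟨δ, hδ, hρeq⟩ := ρ.2
      have hρS : (ρ : Ordinal) ∈ S1' := hρeq ▸ (hr δ hδ).1
      have hs1 : p ρ.1 ⊆ Set.Iio (γ₀+1) := hpsub _ hρS
      have hs2 : #(p ρ.1) < Cardinal.lift.{u+1} θ := hpcard _ (hS1'Y hρS)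
      obtain ⟨c', hc'lt, hc'eq⟩ := Cardinal.lt_lift_iff.mp hs2
      have hmk : #(↥(Set.Iio c'.ord)) = #(↥(p ρ.1)) := by
        rw [Ordinal.mk_Iio_ordinal, Cardinal.card_ord, hc'eq]
      obtain ⟨ψ⟩ := Cardinal.eq.mp hmk
      refine ⟨⟨⟨c'.ord, Cardinal.ord_lt_ord.mpr hc'lt⟩,
        fun i => ⟨(ψ i : Ordinal), hs1 (ψ i).2⟩⟩, ?_⟩
      ext x
      constructor
      · rintro ⟨i, rfl⟩
        exact (ψ i).2
      · intro hx
        exact ⟨ψ.symm ⟨x, hx⟩, by simp⟩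
    choose Jf hJf using henc
    have hJinj : Function.Injective Jf := by
      intro ρ ρ' hJ
      have hpp : p ρ.1 = p ρ'.1 := by rw [← hJf ρ, ← hJf ρ', hJ]
      obtain ⟨δ, hδ, hρeq⟩ := ρ.2
      obtain ⟨δ', hδ', hρ'eq⟩ := ρ'.2
      apply Subtype.ext
      rw [← hρeq, ← hρ'eq]
      apply hrinj δ hδ δ' hδ'
      rw [← (hr δ hδ).2, ← (hr δ' hδ').2, hρeq, hρ'eq, hpp]
    have hSig : #(Σ o : ↥(Set.Iio θ.ord), (↥(Set.Iio o.1) → ↥(Set.Iio (γ₀+1)))) ≤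
        Cardinal.lift.{u+1} lam := by
      rw [Cardinal.mk_sigma]
      calc (Cardinal.sum fun o : ↥(Set.Iio θ.ord) => #(↥(Set.Iio o.1) → ↥(Set.Iio (γ₀+1))))
          ≤ Cardinal.sum fun _ : ↥(Set.Iio θ.ord) =>
              Cardinal.lift.{u+1} (Cardinal.powerlt (γ₀+1).card θ) := by
            refine Cardinal.sum_le_sum _ _ fun o => ?_
            have h1 : #(↥(Set.Iio o.1) → ↥(Set.Iio (γ₀+1))) =
                Cardinal.lift.{u+1} ((γ₀+1).card ^ o.1.card) := by
              rw [← Cardinal.power_def, Ordinal.mk_Iio_ordinal, Ordinal.mk_Iio_ordinal,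
                ← Cardinal.lift_power]
            rw [h1]
            exact Cardinal.lift_le.mpr (Cardinal.le_powerlt _ (Cardinal.lt_ord.mp o.2))
        _ = #(↥(Set.Iio θ.ord)) * Cardinal.lift.{u+1} (Cardinal.powerlt (γ₀+1).card θ) :=
            Cardinal.sum_const' _ _
        _ = Cardinal.lift.{u+1} lam := by
            rw [Ordinal.mk_Iio_ordinal, Cardinal.card_ord, ← Cardinal.lift_mul]
    have hcount : #(↥(r '' S1')) ≤ #(↥(Set.Iio lam.ord)) := by
      rw [Ordinal.mk_Iio_ordinal, Cardinal.card_ord]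
      exact le_trans (Cardinal.mk_le_of_injective hJinj) hSig
    obtain ⟨e⟩ := (Cardinal.le_def _ _).mp hcount
    set fD : Ordinal.{u} → Set Ordinal.{u} := fun γ =>
      if h : ∃ ρ : ↥(r '' S1'), ((e ρ : ↥(Set.Iio lam.ord)) : Ordinal) = γ then
        Set.Iio κ.ord \ {δ ∈ S1' | r δ = h.choose.1} else Set.Iio κ.ord with hfD
    have hfDmem : ∀ γ ∈ Set.Iio κ.ord, fD γ ∈ D := by
      intro γ _
      simp only [hfD]
      split
      · next h => exact hcon _ h.choose.2
      · exact hKD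
    have hA := hdiag fD hfDmem
    have hlamord : lam.ord ∈ Set.Iio κ.ord := Cardinal.ord_lt_ord.mpr hlamκ
    have hA' : {δ ∈ Set.Iio κ.ord | ∀ γ < δ, δ ∈ fD γ} ∩
        {δ ∈ Set.Iio κ.ord | lam.ord < δ} ∈ D := hint _ hA _ (htail _ hlamord)
    refine hup _ hA' _ ?_ Set.diff_subset
    rintro δ ⟨⟨hδK, hδdiag⟩, ⟨_, hδlam⟩⟩
    refine ⟨hδK, fun hδS => ?_⟩
    set ρ : ↥(r '' S1') := ⟨r δ, Set.mem_image_of_mem r hδS⟩ with hρ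
    have hγlt : ((e ρ : ↥(Set.Iio lam.ord)) : Ordinal) < δ := lt_trans (e ρ).2 hδlam
    have h1 := hδdiag _ hγlt
    simp only [hfD] at h1
    have hex : ∃ ρ' : ↥(r '' S1'), ((e ρ' : ↥(Set.Iio lam.ord)) : Ordinal) =
        ((e ρ : ↥(Set.Iio lam.ord)) : Ordinal) := ⟨ρ, rfl⟩
    rw [dif_pos hex] at h1
    have hch : hex.choose = ρ := e.injective (Subtype.val_injective hex.choose_spec)
    rw [hch] at h1
    exact h1.2 ⟨hδS, rfl⟩
  obtain ⟨ρv, hρvmem, hS2pos⟩ := hPigeon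
  set S2 : Set Ordinal.{u} := {δ ∈ S1' | r δ = ρv} with hS2def
  set bstar : Set Ordinal.{u} := p ρv with hbstar
  have hS2p : ∀ δ ∈ S2, p δ = bstar := by
    intro δ hδ
    rw [hbstar, ← hδ.2, (hr δ hδ.1).2]
  have hS2sub : S2 ⊆ S1' := fun δ hδ => hδ.1
  have hsupb : ∀ γ ∈ S2, sSup (b γ) ∈ Set.Iio κ.ord := by
    intro γ hγ
    refine Set.mem_Iio.mpr (sSup_small_lt ?_ (fun x hx => hbsub γ hx))
    rw [hreg.cof_eq]
    exact lt_trans (hblt γ (hS1'Y (hS2sub hγ))) (Cardinal.lift_lt.mpr hθ)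
  set fD2 : Ordinal.{u} → Set Ordinal.{u} := fun γ =>
    if γ ∈ S2 then {δ ∈ Set.Iio κ.ord | sSup (b γ) < δ} else Set.Iio κ.ord with hfD2
  have hfD2mem : ∀ γ ∈ Set.Iio κ.ord, fD2 γ ∈ D := by
    intro γ _
    simp only [hfD2]
    split
    · next h => exact htail _ (hsupb γ h)
    · exact hKD
  have hA2 := hdiag fD2 hfD2mem
  set Z : Set Ordinal.{u} := S2 ∩ {δ ∈ Set.Iio κ.ord | ∀ γ < δ, δ ∈ fD2 γ} with hZdef
  have hZpos : Set.Iio κ.ord \ Z ∉ D := hposInter S2 _ hS2pos hA2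
  have hZY : Z ⊆ Y := fun δ hδ => hS1'Y (hS2sub hδ.1)
  have key1 : ∀ α ∈ Z, ∀ β ∈ Z, α < β → b α ∩ b β = bstar := by
    intro α hα β hβ hαβ
    have hpα : p α = bstar := hS2p α hα.1
    have hpβ : p β = bstar := hS2p β hβ.1
    apply Set.Subset.antisymm
    · rintro x ⟨hxα, hxβ⟩
      have h1 := hβ.2.2 α hαβ
      simp only [hfD2, if_pos hα.1] at h1
      have hxsup : x ≤ sSup (b α) :=
        le_csSup ⟨κ.ord, fun y hy => (hbsub α hy).le⟩ hxα
      have hxβ' : x < β := lt_of_le_of_lt hxsup h1.2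
      rw [← hpβ]
      exact ⟨hxβ, hxβ'⟩
    · intro x hx
      constructor
      · rw [← hpα] at hx; exact hx.1
      · rw [← hpβ] at hx; exact hx.1
  have key : ∀ α ∈ Z, ∀ β ∈ Z, α ≠ β → b α ∩ b β = bstar := by
    intro α hα β hβ hne
    rcases hne.lt_or_gt with h | h
    · exact key1 α hα β hβ h
    · rw [Set.inter_comm]; exact key1 β hβ α hα h
  refine ⟨Z, hZY, hZpos, Subtype.val '' (hfun ⁻¹' bstar), ?_⟩
  intro α hα β hβ hne
  have hkey := key α hα β hβ hne
  ext v
  constructor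
  · rintro ⟨hvα, hvβ⟩
    have hvU : v ∈ U := hmemU α (hZY hα) hvα
    refine ⟨⟨v, hvU⟩, ?_, rfl⟩
    have h1 : hfun ⟨v, hvU⟩ ∈ b α := ⟨⟨v, hvU⟩, hvα, rfl⟩
    have h2 : hfun ⟨v, hvU⟩ ∈ b β := ⟨⟨v, hvU⟩, hvβ, rfl⟩
    show hfun ⟨v, hvU⟩ ∈ bstar
    rw [← hkey]
    exact ⟨h1, h2⟩
  · rintro ⟨x, hx, rfl⟩
    have hx' : hfun x ∈ b α ∩ b β := hkey ▸ hx
    obtain ⟨x1, hx1, hx1e⟩ := hx'.1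
    obtain ⟨x2, hx2, hx2e⟩ := hx'.2
    rw [hfinj hx1e] at hx1
    rw [hfinj hx2e] at hx2
    exact ⟨hx1, hx2⟩
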